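/- There exist a constant C ≥ 1 and a function κ : ℕ → ℕ with the following property: for every finite-dimensional real Banach space E of dimension n and every positively homogeneous function f : E* → ℝ one has ‖f‖_{FBL[E]} ≤ C · ‖f‖_{FBL_{κ(n)}[E]}. -/

import Mathlib

open scoped ENNReal

/-- `‖f‖_{FBL_k[E]}`: the `k`-vector free Banach lattice norm of a positively homogeneous
function `f : E* → ℝ`, with values in `[0,∞]`. -/
noncomputable def fblNormK (E : Type*) [NormedAddCommGroup E] [NormedSpace ℝ E]
    (k : ℕ) (f : (E →L[ℝ] ℝ) → ℝ) : ℝ≥0∞ :=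
  ⨆ (x : Fin k → (E →L[ℝ] ℝ)) (_ : ∀ v : E, ‖v‖ ≤ 1 → ∑ i, |x i v| ≤ 1),
    ENNReal.ofReal (∑ i, |f (x i)|)

/-- `‖f‖_{FBL[E]} = sup_k ‖f‖_{FBL_k[E]}`. -/
noncomputable def fblNorm (E : Type*) [NormedAddCommGroup E] [NormedSpace ℝ E]
    (f : (E →L[ℝ] ℝ) → ℝ) : ℝ≥0∞ :=
  ⨆ k : ℕ, fblNormK E k f

/-- Auerbach-type lemma: there is a family `e` in the unit ball of `E` such that
`‖u‖ ≤ ∑ j, |u (e j)|` for every functional `u`. -/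
lemma exists_auerbach (E : Type) [NormedAddCommGroup E] [NormedSpace ℝ E]
    [FiniteDimensional ℝ E] :
    ∃ e : Fin (Module.finrank ℝ E) → E, (∀ j, ‖e j‖ ≤ 1) ∧
      ∀ u : E →L[ℝ] ℝ, ‖u‖ ≤ ∑ j, |u (e j)| := by
  classical
  set n := Module.finrank ℝ E with hn
  let b : Module.Basis (Fin n) ℝ E := Module.finBasis ℝ E
  -- the determinant function is continuous
  have hdet_cont : Continuous fun v : Fin n → E => b.det v := by
    have h : (fun v : Fin n → E => b.det v) = fun v => (b.toMatrix v).det := by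
      funext v; exact b.det_apply v
    rw [h]
    refine Continuous.matrix_det (continuous_matrix fun i j => ?_)
    have h1 : Continuous fun x : E => b.repr x i :=
      (b.coord i).continuous_of_finiteDimensional
    exact h1.comp (continuous_apply j)
  -- the compact set of families in the unit ball
  set K : Set (Fin n → E) := Set.univ.pi fun _ => Metric.closedBall (0 : E) 1 with hK
  have hKc : IsCompact K := isCompact_univ_pi fun _ => isCompact_closedBall 0 1
  set v0 : Fin n → E := fun i => ‖b i‖⁻¹ • b i with hv0
  have hv0K : v0 ∈ K := by
    intro i _
    have hb : b i ≠ 0 := b.ne_zero i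
    simp only [v0, Metric.mem_closedBall, dist_zero_right, norm_smul, norm_inv, norm_norm]
    rw [inv_mul_cancel₀ (norm_ne_zero_iff.mpr hb)]
  obtain ⟨e, heK, hmax⟩ := hKc.exists_isMaxOn ⟨v0, hv0K⟩
    ((continuous_abs.comp hdet_cont).continuousOn)
  have heB : ∀ j, ‖e j‖ ≤ 1 := by
    intro j
    have := heK j (Set.mem_univ j)
    simpa [Metric.mem_closedBall, dist_zero_right] using this
  -- the max is positive
  have hpos : 0 < |b.det e| := by
    have hv0val : b.det v0 = (∏ i, ‖b i‖⁻¹) • b.det b := by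
      have := b.det.toMultilinearMap.map_smul_univ (fun i => ‖b i‖⁻¹) (fun i => b i)
      simpa [v0] using this
    have hdetb : b.det b = 1 := b.det_self
    have h1 : 0 < |b.det v0| := by
      rw [hv0val, hdetb, smul_eq_mul, mul_one, Finset.abs_prod]
      refine Finset.prod_pos fun i _ => ?_
      have hb : b i ≠ 0 := b.ne_zero i
      rw [abs_inv, abs_norm]
      exact inv_pos.mpr (norm_pos_iff.mpr hb)
    exact lt_of_lt_of_le h1 (hmax hv0K)
  have hdet_ne : b.det e ≠ 0 := fun h => by simp [h] at hpos
  -- e is a basis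
  obtain ⟨hli, hsp⟩ := (Module.Basis.is_basis_iff_det b).mpr (isUnit_iff_ne_zero.mpr hdet_ne)
  let e' : Module.Basis (Fin n) ℝ E := Module.Basis.mk hli (le_of_eq hsp.symm)
  have he' : ∀ i, e' i = e i := fun i => by simp [e', Module.Basis.coe_mk]
  -- determinant with one column replaced
  have hdetupd : ∀ (x : E) (j : Fin n),
      b.det (Function.update e j x) = e'.repr x j * b.det e := by
    intro x j
    have hx : x = ∑ i, e'.repr x i • e i := by
      conv_lhs => rw [← e'.sum_repr x]
      exact Finset.sum_congr rfl fun i _ => by rw [he' i]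
    conv_lhs => rw [hx]
    rw [AlternatingMap.map_update_sum]
    rw [Finset.sum_eq_single j]
    · rw [AlternatingMap.map_update_smul, Function.update_eq_self, smul_eq_mul]
    · intro m _ hm
      rw [AlternatingMap.map_update_smul]
      have h0 : b.det (Function.update e j (e m)) = 0 :=
        b.det.map_update_self (v := e) (Ne.symm hm)
      rw [h0, smul_zero]
    · intro h; exact absurd (Finset.mem_univ j) h
  -- coordinates are bounded by the norm
  have hcoord : ∀ x : E, ‖x‖ ≤ 1 → ∀ j, |e'.repr x j| ≤ 1 := by
    intro x hx j
    have hupdK : Function.update e j x ∈ K := by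
      intro i _
      simp only [Metric.mem_closedBall, dist_zero_right]
      rcases eq_or_ne i j with rfl | hij
      · rwa [Function.update_self]
      · rw [Function.update_of_ne hij]; exact heB i
    have h1 : |b.det (Function.update e j x)| ≤ |b.det e| := hmax hupdK
    rw [hdetupd x j, abs_mul] at h1
    by_contra hcon
    push_neg at hcon
    have : |b.det e| < |e'.repr x j| * |b.det e| := by
      nlinarith [hpos]
    linarith
  have hrepr : ∀ (x : E) (j : Fin n), |e'.repr x j| ≤ ‖x‖ := by
    intro x j
    rcases eq_or_ne x 0 with rfl | hx
    · simp
    · have hnx : (0:ℝ) < ‖x‖ := norm_pos_iff.mpr hx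
      have h1 : ‖(‖x‖⁻¹ • x)‖ ≤ 1 := by
        rw [norm_smul, norm_inv, norm_norm, inv_mul_cancel₀ (ne_of_gt hnx)]
      have h2 := hcoord _ h1 j
      rw [map_smul, Finsupp.smul_apply, smul_eq_mul, abs_mul, abs_inv, abs_norm] at h2
      calc |e'.repr x j| = ‖x‖ * (‖x‖⁻¹ * |e'.repr x j|) := by field_simp
        _ ≤ ‖x‖ * 1 := mul_le_mul_of_nonneg_left h2 (le_of_lt hnx)
        _ = ‖x‖ := mul_one _
  refine ⟨e, heB, fun u => ?_⟩
  refine ContinuousLinearMap.opNorm_le_bound u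
    (Finset.sum_nonneg fun j _ => abs_nonneg _) fun x => ?_
  have hx : x = ∑ i, e'.repr x i • e i := by
    conv_lhs => rw [← e'.sum_repr x]
    exact Finset.sum_congr rfl fun i _ => by rw [he' i]
  have h1 : u x = ∑ i, e'.repr x i * u (e i) := by
    conv_lhs => rw [hx]
    rw [map_sum]
    exact Finset.sum_congr rfl fun i _ => by rw [map_smul, smul_eq_mul]
  rw [Real.norm_eq_abs, h1]
  calc |∑ i, e'.repr x i * u (e i)| ≤ ∑ i, |e'.repr x i * u (e i)| :=
        Finset.abs_sum_le_sum_abs _ _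
    _ ≤ ∑ i, ‖x‖ * |u (e i)| := by
        refine Finset.sum_le_sum fun i _ => ?_
        rw [abs_mul]
        exact mul_le_mul_of_nonneg_right (hrepr x i) (abs_nonneg _)
    _ = (∑ i, |u (e i)|) * ‖x‖ := by rw [← Finset.mul_sum, mul_comm]

set_option maxHeartbeats 2000000 in
/-- Core estimate: given an Auerbach-type family `e`, any admissible `k`-family is dominated,
up to a factor `2`, by an admissible family indexed by the classes. -/
lemma key_estimate (E : Type) [NormedAddCommGroup E] [NormedSpace ℝ E]
    (f : (E →L[ℝ] ℝ) → ℝ)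
    (hf : ∀ t : ℝ, 0 ≤ t → ∀ y : E →L[ℝ] ℝ, f (t • y) = t * f y)
    (n : ℕ) (e : Fin n → E) (he1 : ∀ j, ‖e j‖ ≤ 1)
    (he2 : ∀ u : E →L[ℝ] ℝ, ‖u‖ ≤ ∑ j, |u (e j)|)
    (k : ℕ) (x : Fin k → (E →L[ℝ] ℝ))
    (hx : ∀ v : E, ‖v‖ ≤ 1 → ∑ i, |x i v| ≤ 1) :
    ENNReal.ofReal (∑ i, |f (x i)|) ≤
      ENNReal.ofReal 2 * fblNormK E ((2 * n ^ 2 + 3) ^ n) f := by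
  classical
  have hf0 : f 0 = 0 := by
    have h := hf 0 le_rfl 0
    rwa [zero_smul, zero_mul] at h
  set q : ℕ := n ^ 2 with hq
  set N : ℤ := (q : ℤ) + 1 with hNdef
  have hN0 : (0:ℤ) ≤ N := by omega
  set Nr : ℝ := (q : ℝ) + 1 with hNr
  have hNrpos : (0:ℝ) < Nr := by positivity
  have hcastN : ((N : ℤ) : ℝ) = Nr := by rw [hNdef, hNr]; push_cast; ring
  set u : Fin k → (E →L[ℝ] ℝ) := fun i => ‖x i‖⁻¹ • x i with hu
  set G : Finset (Fin k) := Finset.univ.filter (fun i => x i ≠ 0) with hG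
  have hGne : ∀ i ∈ G, x i ≠ 0 := fun i hi => (Finset.mem_filter.mp hi).2
  have hunorm : ∀ i ∈ G, ‖u i‖ = 1 := by
    intro i hi
    show ‖‖x i‖⁻¹ • x i‖ = 1
    rw [norm_smul (‖x i‖⁻¹) (x i), norm_inv, norm_norm,
      inv_mul_cancel₀ (norm_ne_zero_iff.mpr (hGne i hi))]
  have hxu : ∀ i ∈ G, x i = ‖x i‖ • u i := by
    intro i hi
    show x i = ‖x i‖ • ‖x i‖⁻¹ • x i
    rw [smul_smul, mul_inv_cancel₀ (norm_ne_zero_iff.mpr (hGne i hi)), one_smul]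
  -- coordinates of normalized functionals are bounded
  have hcoordbd : ∀ i ∈ G, ∀ j, |u i (e j)| ≤ 1 := by
    intro i hi j
    have h1 : ‖u i (e j)‖ ≤ ‖u i‖ * ‖e j‖ := (u i).le_opNorm (e j)
    rw [hunorm i hi, one_mul, Real.norm_eq_abs] at h1
    exact h1.trans (he1 j)
  -- floors of rescaled coordinates lie in [-N, N]
  have hfloor : ∀ i ∈ G, ∀ j, -N ≤ ⌊u i (e j) * Nr⌋ ∧ ⌊u i (e j) * Nr⌋ ≤ N := by
    intro i hi j
    have hb := hcoordbd i hi j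
    have habs : |u i (e j) * Nr| ≤ Nr := by
      rw [abs_mul, abs_of_pos hNrpos]
      nlinarith
    have hlow : -Nr ≤ u i (e j) * Nr := by linarith [(abs_le.mp habs).1]
    have hhigh : u i (e j) * Nr ≤ Nr := (abs_le.mp habs).2
    constructor
    · rw [Int.le_floor]
      push_cast
      rw [hcastN]
      linarith
    · have h2 : (⌊u i (e j) * Nr⌋ : ℝ) ≤ ((N : ℤ) : ℝ) := by
        rw [hcastN]
        exact (Int.floor_le _).trans hhigh
      exact_mod_cast h2
  set clamp : ℤ → ℤ := fun z => max (-N) (min N z) with hclampdef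
  have hclamp_lb : ∀ z, -N ≤ clamp z := fun z => le_max_left _ _
  have hclamp_ub : ∀ z, clamp z ≤ N := fun z => max_le (by omega) (min_le_left _ _)
  have hclamp_id : ∀ z, -N ≤ z → z ≤ N → clamp z = z := by
    intro z h1 h2
    show max (-N) (min N z) = z
    rw [min_eq_right h2, max_eq_right h1]
  -- the classifying map
  have hψbd : ∀ i j, (clamp ⌊u i (e j) * Nr⌋ + N).toNat < 2 * q + 3 := by
    intro i j
    have h1 := hclamp_lb ⌊u i (e j) * Nr⌋
    have h2 := hclamp_ub ⌊u i (e j) * Nr⌋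
    omega
  set ψ : Fin k → (Fin n → Fin (2 * q + 3)) := fun i j =>
    ⟨(clamp ⌊u i (e j) * Nr⌋ + N).toNat, hψbd i j⟩ with hψ
  -- functionals in the same class are close
  have hclose : ∀ i ∈ G, ∀ i' ∈ G, ψ i = ψ i' → ‖u i - u i'‖ ≤ (n : ℝ) / Nr := by
    intro i hi i' hi' hψeq
    have hcoordclose : ∀ j, |(u i - u i') (e j)| ≤ 1 / Nr := by
      intro j
      have h1 := congrFun hψeq j
      rw [hψ] at h1
      simp only [Fin.mk.injEq] at h1
      have h2 := hclamp_lb ⌊u i (e j) * Nr⌋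
      have h3 := hclamp_ub ⌊u i (e j) * Nr⌋
      have h4 := hclamp_lb ⌊u i' (e j) * Nr⌋
      have h5 := hclamp_ub ⌊u i' (e j) * Nr⌋
      have hceq : clamp ⌊u i (e j) * Nr⌋ = clamp ⌊u i' (e j) * Nr⌋ := by omega
      have hfl := hfloor i hi j
      have hfl' := hfloor i' hi' j
      rw [hclamp_id _ hfl.1 hfl.2, hclamp_id _ hfl'.1 hfl'.2] at hceq
      have hceqr : ((⌊u i (e j) * Nr⌋ : ℤ) : ℝ) = ((⌊u i' (e j) * Nr⌋ : ℤ) : ℝ) := by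
        exact_mod_cast hceq
      have ha1 : (⌊u i (e j) * Nr⌋ : ℝ) ≤ u i (e j) * Nr := Int.floor_le _
      have ha2 : u i (e j) * Nr < ⌊u i (e j) * Nr⌋ + 1 := Int.lt_floor_add_one _
      have hb1 : (⌊u i' (e j) * Nr⌋ : ℝ) ≤ u i' (e j) * Nr := Int.floor_le _
      have hb2 : u i' (e j) * Nr < ⌊u i' (e j) * Nr⌋ + 1 := Int.lt_floor_add_one _
      have hdiff : |u i (e j) * Nr - u i' (e j) * Nr| ≤ 1 := by
        rw [abs_le]
        constructor <;> linarith
      have happ : (u i - u i') (e j) = u i (e j) - u i' (e j) :=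
        ContinuousLinearMap.sub_apply _ _ _
      rw [happ, le_div_iff₀ hNrpos]
      calc |u i (e j) - u i' (e j)| * Nr
          = |u i (e j) * Nr - u i' (e j) * Nr| := by
            rw [← sub_mul, abs_mul, abs_of_pos hNrpos]
        _ ≤ 1 := hdiff
    calc ‖u i - u i'‖ ≤ ∑ j, |(u i - u i') (e j)| := he2 _
      _ ≤ ∑ _j : Fin n, 1 / Nr := Finset.sum_le_sum fun j _ => hcoordclose j
      _ = (n : ℝ) / Nr := by
          rw [Finset.sum_const, Finset.card_univ, Fintype.card_fin, nsmul_eq_mul]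
          ring
  -- total mass bound
  have hS : ∑ i ∈ G, ‖x i‖ ≤ (n : ℝ) := by
    calc ∑ i ∈ G, ‖x i‖ ≤ ∑ i ∈ G, ∑ j, |x i (e j)| :=
          Finset.sum_le_sum fun i _ => he2 (x i)
      _ ≤ ∑ i : Fin k, ∑ j, |x i (e j)| :=
          Finset.sum_le_sum_of_subset_of_nonneg (Finset.subset_univ G)
            fun i _ _ => Finset.sum_nonneg fun j _ => abs_nonneg _
      _ = ∑ j, ∑ i : Fin k, |x i (e j)| := Finset.sum_comm
      _ ≤ ∑ _j : Fin n, 1 := Finset.sum_le_sum fun j _ => hx (e j) (he1 j)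
      _ = (n : ℝ) := by simp
  -- the classes
  have hrepex : ∀ c : Fin n → Fin (2 * q + 3),
      (G.filter (fun i => ψ i = c)).Nonempty →
      ∃ i ∈ G.filter (fun i => ψ i = c), ∀ i' ∈ G.filter (fun i => ψ i = c),
        |f (u i')| ≤ |f (u i)| :=
    fun c hc => Finset.exists_max_image _ (fun i => |f (u i)|) hc
  set y' : (Fin n → Fin (2 * q + 3)) → (E →L[ℝ] ℝ) := fun c =>
    if hc : (G.filter (fun i => ψ i = c)).Nonempty then
      (2⁻¹ * ∑ i ∈ G.filter (fun i => ψ i = c), ‖x i‖) • u (hrepex c hc).choose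
    else 0 with hy'
  -- admissibility of y'
  have hadm : ∀ v : E, ‖v‖ ≤ 1 → ∑ c, |y' c v| ≤ 1 := by
    intro v hv
    have hperc : ∀ c, |y' c v| ≤
        2⁻¹ * ∑ i ∈ G.filter (fun i => ψ i = c), (‖x i‖ * (|u i v| + (n : ℝ) / Nr)) := by
      intro c
      by_cases hc : (G.filter (fun i => ψ i = c)).Nonempty
      · rw [hy']
        simp only [dif_pos hc]
        set r := (hrepex c hc).choose with hr
        have hrmem : r ∈ G.filter (fun i => ψ i = c) := (hrepex c hc).choose_spec.1
        have hrG : r ∈ G := (Finset.mem_filter.mp hrmem).1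
        have hrψ : ψ r = c := (Finset.mem_filter.mp hrmem).2
        have hnn : (0:ℝ) ≤ 2⁻¹ * ∑ i ∈ G.filter (fun i => ψ i = c), ‖x i‖ :=
          mul_nonneg (by norm_num) (Finset.sum_nonneg fun i _ => norm_nonneg _)
        rw [ContinuousLinearMap.smul_apply, smul_eq_mul, abs_mul, abs_of_nonneg hnn]
        rw [mul_assoc, Finset.sum_mul]
        refine mul_le_mul_of_nonneg_left ?_ (by norm_num)
        refine Finset.sum_le_sum fun i hi => ?_
        have hiG : i ∈ G := (Finset.mem_filter.mp hi).1
        have hiψ : ψ i = c := (Finset.mem_filter.mp hi).2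
        have hclosei : ‖u r - u i‖ ≤ (n : ℝ) / Nr :=
          hclose r hrG i hiG (by rw [hrψ, hiψ])
        have hvr : |u r v| ≤ |u i v| + (n : ℝ) / Nr := by
          have h1 : |u r v - u i v| ≤ ‖u r - u i‖ * ‖v‖ := by
            have h0 := (u r - u i).le_opNorm v
            rwa [ContinuousLinearMap.sub_apply, Real.norm_eq_abs] at h0
          have h2 : ‖u r - u i‖ * ‖v‖ ≤ (n : ℝ) / Nr := by
            calc ‖u r - u i‖ * ‖v‖ ≤ ((n : ℝ) / Nr) * 1 :=
                  mul_le_mul hclosei hv (norm_nonneg _) (by positivity)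
              _ = (n : ℝ) / Nr := mul_one _
          have h3 := abs_sub_abs_le_abs_sub (u r v) (u i v)
          linarith [h1.trans h2]
        exact mul_le_mul_of_nonneg_left hvr (norm_nonneg _)
      · rw [hy']
        simp only [dif_neg hc]
        rw [Finset.not_nonempty_iff_eq_empty.mp hc]
        simp
    calc ∑ c, |y' c v|
        ≤ ∑ c, 2⁻¹ * ∑ i ∈ G.filter (fun i => ψ i = c), (‖x i‖ * (|u i v| + (n : ℝ) / Nr)) :=
          Finset.sum_le_sum fun c _ => hperc c
      _ = 2⁻¹ * ∑ c, ∑ i ∈ G.filter (fun i => ψ i = c), (‖x i‖ * (|u i v| + (n : ℝ) / Nr)) := by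
          rw [Finset.mul_sum]
      _ = 2⁻¹ * ∑ i ∈ G, (‖x i‖ * (|u i v| + (n : ℝ) / Nr)) := by
          rw [Finset.sum_fiberwise_of_maps_to (fun i _ => Finset.mem_univ (ψ i))]
      _ = 2⁻¹ * ((∑ i ∈ G, ‖x i‖ * |u i v|) + (∑ i ∈ G, ‖x i‖) * ((n : ℝ) / Nr)) := by
          rw [Finset.sum_mul]
          congr 1
          rw [← Finset.sum_add_distrib]
          exact Finset.sum_congr rfl fun i _ => by ring
      _ ≤ 2⁻¹ * (1 + 1) := by
          have hA : ∑ i ∈ G, ‖x i‖ * |u i v| ≤ 1 := by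
            have heq : ∀ i ∈ G, ‖x i‖ * |u i v| = |x i v| := by
              intro i hi
              have hxv : x i v = ‖x i‖ * (u i v) := by
                conv_lhs => rw [hxu i hi]
                rfl
              rw [hxv, abs_mul, abs_of_nonneg (norm_nonneg (x i))]
            rw [Finset.sum_congr rfl heq]
            calc ∑ i ∈ G, |x i v| ≤ ∑ i : Fin k, |x i v| :=
                  Finset.sum_le_sum_of_subset_of_nonneg (Finset.subset_univ G)
                    fun i _ _ => abs_nonneg _
              _ ≤ 1 := hx v hv
          have hB : (∑ i ∈ G, ‖x i‖) * ((n : ℝ) / Nr) ≤ 1 := by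
            have h1 : (∑ i ∈ G, ‖x i‖) * ((n : ℝ) / Nr) ≤ (n : ℝ) * ((n : ℝ) / Nr) :=
              mul_le_mul_of_nonneg_right hS (by positivity)
            have h2 : (n : ℝ) * ((n : ℝ) / Nr) ≤ 1 := by
              rw [← mul_div_assoc, div_le_one hNrpos, hNr, hq]
              push_cast
              nlinarith
            linarith
          nlinarith
      _ = 1 := by norm_num
  -- value estimate
  have hval : ∑ i, |f (x i)| ≤ 2 * ∑ c, |f (y' c)| := by
    have hstep1 : ∑ i, |f (x i)| = ∑ i ∈ G, |f (x i)| := by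
      symm
      refine Finset.sum_subset (Finset.subset_univ G) fun i _ hi => ?_
      have hz : x i = 0 := by
        by_contra hne
        exact hi (Finset.mem_filter.mpr ⟨Finset.mem_univ i, hne⟩)
      rw [hz, hf0, abs_zero]
    have hstep2 : ∀ i ∈ G, |f (x i)| = ‖x i‖ * |f (u i)| := by
      intro i hi
      conv_lhs => rw [hxu i hi]
      rw [hf _ (norm_nonneg _), abs_mul, abs_norm]
    have hstep3 : ∀ c, ∑ i ∈ G.filter (fun i => ψ i = c), ‖x i‖ * |f (u i)|
        ≤ 2 * |f (y' c)| := by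
      intro c
      by_cases hc : (G.filter (fun i => ψ i = c)).Nonempty
      · set r := (hrepex c hc).choose with hr
        have hrmax : ∀ i' ∈ G.filter (fun i => ψ i = c), |f (u i')| ≤ |f (u r)| :=
          (hrepex c hc).choose_spec.2
        have hy'c : f (y' c) = (2⁻¹ * ∑ i ∈ G.filter (fun i => ψ i = c), ‖x i‖) * f (u r) := by
          rw [hy']
          simp only [dif_pos hc]
          exact hf _ (mul_nonneg (by norm_num)
            (Finset.sum_nonneg fun i _ => norm_nonneg _)) _
        have hnn : (0:ℝ) ≤ 2⁻¹ * ∑ i ∈ G.filter (fun i => ψ i = c), ‖x i‖ :=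
          mul_nonneg (by norm_num) (Finset.sum_nonneg fun i _ => norm_nonneg _)
        calc ∑ i ∈ G.filter (fun i => ψ i = c), ‖x i‖ * |f (u i)|
            ≤ ∑ i ∈ G.filter (fun i => ψ i = c), ‖x i‖ * |f (u r)| :=
              Finset.sum_le_sum fun i hi =>
                mul_le_mul_of_nonneg_left (hrmax i hi) (norm_nonneg _)
          _ = (∑ i ∈ G.filter (fun i => ψ i = c), ‖x i‖) * |f (u r)| := by
              rw [Finset.sum_mul]
          _ = 2 * |f (y' c)| := by
              rw [hy'c, abs_mul, abs_of_nonneg hnn]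
              ring
      · rw [Finset.not_nonempty_iff_eq_empty.mp hc, hy']
        simp only [dif_neg hc]
        rw [hf0]
        simp
    calc ∑ i, |f (x i)| = ∑ i ∈ G, |f (x i)| := hstep1
      _ = ∑ i ∈ G, ‖x i‖ * |f (u i)| := Finset.sum_congr rfl hstep2
      _ = ∑ c, ∑ i ∈ G.filter (fun i => ψ i = c), ‖x i‖ * |f (u i)| := by
          rw [Finset.sum_fiberwise_of_maps_to (fun i _ => Finset.mem_univ (ψ i))]
      _ ≤ ∑ c, 2 * |f (y' c)| := Finset.sum_le_sum fun c _ => hstep3 c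
      _ = 2 * ∑ c, |f (y' c)| := by rw [Finset.mul_sum]
  -- pass to the Fin-indexed family
  set κn : ℕ := (2 * q + 3) ^ n with hκn
  have eqv : (Fin n → Fin (2 * q + 3)) ≃ Fin κn := finFunctionFinEquiv
  set y : Fin κn → (E →L[ℝ] ℝ) := fun p => y' (eqv.symm p) with hy
  have hysum : ∀ g : (E →L[ℝ] ℝ) → ℝ, ∑ p, g (y p) = ∑ c, g (y' c) := by
    intro g
    exact Fintype.sum_equiv eqv.symm _ _ fun p => rfl
  have hyadm : ∀ v : E, ‖v‖ ≤ 1 → ∑ p, |y p v| ≤ 1 := by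
    intro v hv
    have h := hysum (fun w => |w v|)
    rw [h]
    exact hadm v hv
  have hle : ENNReal.ofReal (∑ c, |f (y' c)|) ≤ fblNormK E κn f := by
    rw [fblNormK]
    have h := le_iSup₂ (f := fun (z : Fin κn → (E →L[ℝ] ℝ))
      (_ : ∀ v : E, ‖v‖ ≤ 1 → ∑ i, |z i v| ≤ 1) =>
        ENNReal.ofReal (∑ i, |f (z i)|)) y hyadm
    have h2 := hysum (fun w => |f w|)
    rw [h2] at h
    exact h
  calc ENNReal.ofReal (∑ i, |f (x i)|)
      ≤ ENNReal.ofReal (2 * ∑ c, |f (y' c)|) := ENNReal.ofReal_le_ofReal hval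
    _ = ENNReal.ofReal 2 * ENNReal.ofReal (∑ c, |f (y' c)|) :=
        ENNReal.ofReal_mul (by norm_num)
    _ ≤ ENNReal.ofReal 2 * fblNormK E κn f := mul_le_mul_right hle _

/-- **Lemma.** There are a universal constant `C ≥ 1` and a function `κ : ℕ → ℕ` such that
for every finite-dimensional Banach space `E` of dimension `n` and every positively
homogeneous `f : E* → ℝ`, `‖f‖_{FBL[E]} ≤ C · ‖f‖_{FBL_{κ(n)}[E]}`. -/
theorem fblNorm_le_const_mul_fblNormK :
    ∃ (C : ℝ) (κ : ℕ → ℕ), 1 ≤ C ∧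
      ∀ (E : Type) [NormedAddCommGroup E] [NormedSpace ℝ E] [FiniteDimensional ℝ E],
        ∀ f : (E →L[ℝ] ℝ) → ℝ,
          (∀ t : ℝ, 0 ≤ t → ∀ y : E →L[ℝ] ℝ, f (t • y) = t * f y) →
          fblNorm E f ≤ ENNReal.ofReal C * fblNormK E (κ (Module.finrank ℝ E)) f := by
  refine ⟨2, fun n => (2 * n ^ 2 + 3) ^ n, one_le_two, ?_⟩
  intro E _ _ _ f hf
  obtain ⟨e, he1, he2⟩ := exists_auerbach E
  rw [fblNorm]
  refine iSup_le fun k => ?_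
  rw [fblNormK]
  refine iSup_le fun x => iSup_le fun hx => ?_
  exact key_estimate E f hf (Module.finrank ℝ E) e he1 he2 k x hx
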